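/- arXiv:1801.10256 — 3 statements merged into one kernel-verified Lean document; each statement's English description precedes it below -/
import Mathlib

section
/- Let f : ℝ → ℂ be almost periodic with f(x) ≥ 0 for all x and sup_x f(x) > 2. Then there exist finitely many real translates f_0, ..., f_{n-1} of f such that the sum g = f_0 + ⋯ + f_{n-1} satisfies g(x) > 1/2 for all x ∈ ℝ. -/
/-- A continuous function `f : ℝ → ℂ` is almost periodic if for every `ε > 0` the set of
`ε`-translation numbers of `f` is relatively dense in `ℝ`. -/
def IsAlmostPeriodic (f : ℝ → ℂ) : Prop :=
  Continuous f ∧ ∀ ε : ℝ, 0 < ε → ∃ L : ℝ, 0 < L ∧ ∀ a : ℝ,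
    ∃ τ ∈ Set.Icc a (a + L), ∀ x : ℝ, ‖f (x + τ) - f x‖ ≤ ε

/-- If `f` is a nonnegative (real-valued) almost periodic function with some value exceeding `2`,
then finitely many translates of `f` sum to a function everywhere `> 1/2`. -/
theorem stmt2 (f : ℝ → ℂ) (hf : IsAlmostPeriodic f)
    (hpos : ∀ x : ℝ, ∃ r : ℝ, 0 ≤ r ∧ f x = (r : ℂ))
    (hsup : ∃ x : ℝ, 2 < (f x).re) :
    ∃ n : ℕ, 0 < n ∧ ∃ s : Fin n → ℝ,
      ∀ x : ℝ, (1 : ℝ) / 2 < (∑ k : Fin n, f (x - s k)).re := by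
  obtain ⟨hc, hap⟩ := hf
  obtain ⟨x₀, hx₀⟩ := hsup
  -- every value of f has nonnegative real part
  have hnn : ∀ y : ℝ, 0 ≤ (f y).re := by
    intro y
    obtain ⟨r, hr0, hre⟩ := hpos y
    rw [hre]; simpa using hr0
  -- continuity of the real part
  have hgc : Continuous fun y => (f y).re := Complex.continuous_re.comp hc
  obtain ⟨δ, hδ, hδ'⟩ := Metric.continuous_iff.mp hgc x₀ ((f x₀).re - 7/4) (by linarith)
  have hball : ∀ y : ℝ, |y - x₀| < δ → 7/4 < (f y).re := by
    intro y hy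
    have := hδ' y (by simpa [Real.dist_eq] using hy)
    rw [Real.dist_eq] at this
    have := abs_lt.mp this
    linarith [this.1]
  obtain ⟨L, hL, hLp⟩ := hap 1 one_pos
  set d : ℝ := δ / 2 with hd
  have hd0 : 0 < d := by positivity
  set m : ℕ := ⌊L / d⌋.toNat with hm
  refine ⟨m + 1, Nat.succ_pos _, fun k => (k : ℝ) * d, fun x => ?_⟩
  obtain ⟨τ, hτ, hτ'⟩ := hLp (x - x₀ - L)
  obtain ⟨hτ1, hτ2⟩ := hτ
  set u : ℝ := x - x₀ - τ with hu
  have hu0 : 0 ≤ u := by simp only [hu]; linarith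
  have huL : u ≤ L := by simp only [hu]; linarith
  set k : ℕ := ⌊u / d⌋.toNat with hk
  have hfl0 : (0 : ℤ) ≤ ⌊u / d⌋ := Int.floor_nonneg.mpr (by positivity)
  have hkcast : (k : ℝ) = (⌊u / d⌋ : ℤ) := by
    rw [hk]; exact_mod_cast Int.toNat_of_nonneg hfl0
  have hk1 : (k : ℝ) * d ≤ u := by
    rw [hkcast]
    calc (⌊u / d⌋ : ℝ) * d ≤ (u / d) * d := by
          gcongr; exact Int.floor_le _
      _ = u := by field_simp
  have hk2 : u < ((k : ℝ) + 1) * d := by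
    rw [hkcast]
    have := Int.lt_floor_add_one (u / d)
    calc u = (u / d) * d := by field_simp
      _ < ((⌊u / d⌋ : ℝ) + 1) * d := by gcongr
  have hklt : k < m + 1 := by
    have : ⌊u / d⌋ ≤ ⌊L / d⌋ := Int.floor_le_floor (by gcongr)
    have : k ≤ m := by
      rw [hk, hm]
      exact Int.toNat_le_toNat this
    omega
  set r : ℝ := u - (k : ℝ) * d with hr
  have hr0 : 0 ≤ r := by simp only [hr]; linarith
  have hrd : r < d := by simp only [hr]; nlinarith
  -- the key translate
  have hkey : 3/4 < (f (x - (k : ℝ) * d)).re := by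
    have hxeq : x - (k : ℝ) * d = (x₀ + r) + τ := by
      simp only [hr, hu]; ring
    have h1 : ‖f ((x₀ + r) + τ) - f (x₀ + r)‖ ≤ 1 := hτ' (x₀ + r)
    have h2 : |(f ((x₀ + r) + τ) - f (x₀ + r)).re| ≤ 1 :=
      le_trans (Complex.abs_re_le_norm _) h1
    rw [Complex.sub_re] at h2
    have h3 : 7/4 < (f (x₀ + r)).re := hball _ (by
      rw [add_sub_cancel_left, abs_of_nonneg hr0]
      calc r < d := hrd
        _ < δ := by rw [hd]; linarith)
    have := abs_le.mp h2
    rw [hxeq]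
    linarith [this.1]
  -- sum is at least the key term
  have hsum : (f (x - (⟨k, hklt⟩ : Fin (m+1)) * d)).re
      ≤ (∑ j : Fin (m+1), f (x - (j : ℝ) * d)).re := by
    rw [Complex.re_sum]
    exact Finset.single_le_sum (f := fun j : Fin (m+1) => (f (x - (j : ℝ) * d)).re)
      (fun j _ => hnn _) (Finset.mem_univ (⟨k, hklt⟩ : Fin (m+1)))
  simp only [Fin.val_mk] at hsum ⊢
  have : (((⟨k, hklt⟩ : Fin (m+1)) : ℝ)) = (k : ℝ) := by norm_cast
  rw [this] at hsum
  linarith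
end

section
/- For every almost periodic function f on ℝ and every λ ∈ ℝ, the limit ε_λ(f) = lim_{T→∞} (1/(2T)) ∫_{-T}^{T} f(t) e^{-iλt} dt exists. -/
open BoundedContinuousFunction Filter MeasureTheory

/-- The exponential `x ↦ e^{iλx}` as a bounded continuous function on `ℝ`. -/
noncomputable def expB (l : ℝ) : BoundedContinuousFunction ℝ ℂ :=
  BoundedContinuousFunction.ofNormedAddCommGroup
    (fun x : ℝ => Complex.exp (Complex.I * l * x))
    (by fun_prop) 1
    (by
      intro x
      rw [Complex.norm_exp]
      simp [Complex.mul_re])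

/-- `AP(ℝ)`: the uniform closure of the linear span of the exponentials. -/
noncomputable def AP : Set (BoundedContinuousFunction ℝ ℂ) :=
  closure ((Submodule.span ℂ (Set.range expB) : Submodule ℂ (BoundedContinuousFunction ℝ ℂ)) :
    Set (BoundedContinuousFunction ℝ ℂ))

noncomputable def uu (l : ℝ) (f : BoundedContinuousFunction ℝ ℂ) (T : ℝ) : ℂ :=
  (1 / (2 * T) : ℂ) * ∫ x in (-T)..T, f x * Complex.exp (-(Complex.I * l * x))

lemma intg (l : ℝ) (f : BoundedContinuousFunction ℝ ℂ) (a b : ℝ) :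
    IntervalIntegrable (fun x : ℝ => f x * Complex.exp (-(Complex.I * l * x))) volume a b := by
  apply Continuous.intervalIntegrable
  fun_prop

lemma norm_exp' (l x : ℝ) : ‖Complex.exp (-(Complex.I * l * x))‖ = 1 := by
  rw [Complex.norm_exp]
  simp [Complex.mul_re]

lemma expB_apply (m x : ℝ) : expB m x = Complex.exp (Complex.I * m * x) := rfl

lemma uu_add (l : ℝ) (f g : BoundedContinuousFunction ℝ ℂ) (T : ℝ) :
    uu l (f + g) T = uu l f T + uu l g T := by
  simp only [uu]
  rw [← mul_add, ← intervalIntegral.integral_add (intg l f _ _) (intg l g _ _)]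
  congr 1
  apply intervalIntegral.integral_congr
  intro x hx
  simp [add_mul]

lemma uu_smul (l : ℝ) (c : ℂ) (f : BoundedContinuousFunction ℝ ℂ) (T : ℝ) :
    uu l (c • f) T = c * uu l f T := by
  simp only [uu]
  have h : (∫ x in (-T)..T, (c • f) x * Complex.exp (-(Complex.I * l * x)))
      = c * ∫ x in (-T)..T, f x * Complex.exp (-(Complex.I * l * x)) := by
    rw [← intervalIntegral.integral_const_mul]
    apply intervalIntegral.integral_congr
    intro x hx
    simp [mul_assoc]
  rw [h]; ring

lemma uu_sub (l : ℝ) (f g : BoundedContinuousFunction ℝ ℂ) (T : ℝ) :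
    uu l f T - uu l g T = uu l (f - g) T := by
  have := uu_add l (f - g) g T
  rw [sub_add_cancel] at this
  rw [this]; ring

lemma uu_bound (l : ℝ) (f : BoundedContinuousFunction ℝ ℂ) {T : ℝ} (hT : 0 < T) :
    ‖uu l f T‖ ≤ ‖f‖ := by
  have h1 : ‖(1 / (2 * (T : ℂ)))‖ = 1 / (2 * T) := by
    have h2 : (2 * (T : ℂ)) = ((2 * T : ℝ) : ℂ) := by push_cast; ring
    rw [norm_div, norm_one, h2, Complex.norm_real, Real.norm_eq_abs, abs_of_pos (by linarith)]
  have h2 : ‖∫ x in (-T)..T, f x * Complex.exp (-(Complex.I * l * x))‖ ≤ ‖f‖ * |T - (-T)| :=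
    intervalIntegral.norm_integral_le_of_norm_le_const (fun x _ => by
      rw [norm_mul, norm_exp', mul_one]; exact f.norm_coe_le_norm x)
  have h3 : |T - (-T)| = 2 * T := by rw [abs_of_pos (by linarith)]; ring
  rw [h3] at h2
  calc ‖uu l f T‖ = (1 / (2 * T)) * ‖∫ x in (-T)..T, f x * Complex.exp (-(Complex.I * l * x))‖ := by
        rw [uu, norm_mul, h1]
    _ ≤ (1 / (2 * T)) * (‖f‖ * (2 * T)) := by
        apply mul_le_mul_of_nonneg_left h2 (by positivity)
    _ = ‖f‖ := by field_simp

lemma uu_expB (l m : ℝ) : ∃ c : ℂ, Tendsto (uu l (expB m)) atTop (nhds c) := by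
  by_cases h : m = l
  · refine ⟨1, ?_⟩
    subst h
    have key : ∀ T : ℝ, 1 ≤ T → uu m (expB m) T = 1 := by
      intro T hT
      have hi : ∀ x ∈ Set.uIcc (-T) T,
          expB m x * Complex.exp (-(Complex.I * m * x)) = 1 := by
        intro x hx
        rw [expB_apply, ← Complex.exp_add]
        simp
      have hT0 : (T : ℂ) ≠ 0 := by
        exact_mod_cast ne_of_gt (lt_of_lt_of_le one_pos hT)
      rw [uu, intervalIntegral.integral_congr hi, intervalIntegral.integral_const,
        sub_neg_eq_add, Complex.real_smul, mul_one]
      push_cast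
      field_simp
      ring
    apply Tendsto.congr' _ tendsto_const_nhds
    filter_upwards [eventually_ge_atTop (1 : ℝ)] with T hT
    exact (key T hT).symm
  · refine ⟨0, ?_⟩
    set a : ℝ := m - l with ha
    have ha0 : a ≠ 0 := sub_ne_zero.mpr h
    have hc0 : (Complex.I * a) ≠ 0 := by
      simp [Complex.I_ne_zero, Complex.ofReal_eq_zero, ha0]
    have key : ∀ T : ℝ, 1 ≤ T → ‖uu l (expB m) T‖ ≤ (1 / (2 * T)) * (2 / |a|) := by
      intro T hT
      have hT0 : 0 < T := lt_of_lt_of_le one_pos hT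
      have hi : ∀ x ∈ Set.uIcc (-T) T,
          expB m x * Complex.exp (-(Complex.I * l * x)) =
            Complex.exp ((Complex.I * a) * x) := by
        intro x hx
        rw [expB_apply, ← Complex.exp_add]
        congr 1
        push_cast [ha]
        ring
      have hint : (∫ x in (-T)..T, expB m x * Complex.exp (-(Complex.I * l * x)))
          = (Complex.exp ((Complex.I * a) * T) - Complex.exp ((Complex.I * a) * (-T)))
            / (Complex.I * a) := by
        rw [intervalIntegral.integral_congr hi]
        have := integral_exp_mul_complex (c := Complex.I * a) hc0 (a := -T) (b := T)
        simpa using this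
      have hnormexp : ∀ s : ℝ, ‖Complex.exp ((Complex.I * a) * s)‖ = 1 := by
        intro s
        rw [Complex.norm_exp]
        simp [Complex.mul_re]
      have e1 : ‖Complex.exp ((Complex.I * a) * T)‖ = 1 := by
        rw [Complex.norm_exp]; simp [Complex.mul_re]
      have e2 : ‖Complex.exp ((Complex.I * a) * (-T : ℝ))‖ = 1 := by
        rw [Complex.norm_exp]; simp [Complex.mul_re]
      have e2' : ‖Complex.exp ((Complex.I * a) * (-(T : ℂ)))‖ = 1 := by
        rw [show ((-(T : ℂ))) = ((-T : ℝ) : ℂ) by push_cast; ring]; exact e2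
      have hnum : ‖Complex.exp ((Complex.I * a) * T) - Complex.exp ((Complex.I * a) * (-(T:ℂ)))‖ ≤ 2 := by
        calc _ ≤ ‖Complex.exp ((Complex.I * a) * T)‖ + ‖Complex.exp ((Complex.I * a) * (-(T:ℂ)))‖ :=
              norm_sub_le _ _
          _ = 2 := by rw [e1, e2']; norm_num
      have hden : ‖(Complex.I * (a : ℂ))‖ = |a| := by
        rw [norm_mul, Complex.norm_I, one_mul, Complex.norm_real, Real.norm_eq_abs]
      have h1 : ‖(1 / (2 * (T : ℂ)))‖ = 1 / (2 * T) := by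
        have h2 : (2 * (T : ℂ)) = ((2 * T : ℝ) : ℂ) := by push_cast; ring
        rw [norm_div, norm_one, h2, Complex.norm_real, Real.norm_eq_abs,
          abs_of_pos (by linarith)]
      rw [uu, norm_mul, h1, hint]
      have hint2 : ‖(Complex.exp ((Complex.I * a) * T) - Complex.exp ((Complex.I * a) * (-T : ℂ)))
            / (Complex.I * a)‖ ≤ 2 / |a| := by
        rw [norm_div, hden]
        exact div_le_div_of_nonneg_right hnum (abs_pos.mpr ha0).le
      exact mul_le_mul_of_nonneg_left hint2 (by positivity)
    have hb : Tendsto (fun T : ℝ => (1 / (2 * T)) * (2 / |a|)) atTop (nhds 0) := by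
      have h2T : Tendsto (fun T : ℝ => 2 * T) atTop atTop :=
        Tendsto.const_mul_atTop two_pos tendsto_id
      have h3 : Tendsto (fun T : ℝ => (2 * T)⁻¹) atTop (nhds 0) :=
        tendsto_inv_atTop_zero.comp h2T
      simpa [one_div] using h3.mul_const (2 / |a|)
    rw [tendsto_zero_iff_norm_tendsto_zero]
    apply squeeze_zero' ?_ ?_ hb
    · filter_upwards with T using norm_nonneg _
    · filter_upwards [eventually_ge_atTop (1 : ℝ)] with T hT using key T hT

lemma uu_span (l : ℝ) (g : BoundedContinuousFunction ℝ ℂ)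
    (hg : g ∈ (Submodule.span ℂ (Set.range expB) : Submodule ℂ (BoundedContinuousFunction ℝ ℂ))) :
    ∃ c : ℂ, Tendsto (uu l g) atTop (nhds c) := by
  induction hg using Submodule.span_induction with
  | mem x hx =>
      obtain ⟨m, rfl⟩ := hx
      exact uu_expB l m
  | zero =>
      refine ⟨0, ?_⟩
      have h : uu l (0 : BoundedContinuousFunction ℝ ℂ) = fun _ => 0 :=
        funext fun T => by simp [uu]
      rw [h]
      exact tendsto_const_nhds
  | add x y hx hy ihx ihy =>
      obtain ⟨cx, hcx⟩ := ihx
      obtain ⟨cy, hcy⟩ := ihy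
      refine ⟨cx + cy, ?_⟩
      have h : uu l (x + y) = fun T => uu l x T + uu l y T := funext (uu_add l x y)
      rw [h]
      exact hcx.add hcy
  | smul c x hx ihx =>
      obtain ⟨cx, hcx⟩ := ihx
      refine ⟨c * cx, ?_⟩
      have h : uu l (c • x) = fun T => c * uu l x T := funext (uu_smul l c x)
      rw [h]
      exact hcx.const_mul c

theorem stmt5' (f : BoundedContinuousFunction ℝ ℂ)
    (hf : f ∈ closure ((Submodule.span ℂ (Set.range expB) :
      Submodule ℂ (BoundedContinuousFunction ℝ ℂ)) : Set (BoundedContinuousFunction ℝ ℂ)))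
    (l : ℝ) : ∃ c : ℂ, Tendsto (uu l f) atTop (nhds c) := by
  have hC : CauchySeq (uu l f) := by
    rw [Metric.cauchySeq_iff]
    intro ε hε
    obtain ⟨g, hg_mem, hg_close⟩ := Metric.mem_closure_iff.mp hf (ε / 4) (by linarith)
    obtain ⟨c, hc⟩ := uu_span l g hg_mem
    obtain ⟨N, hN⟩ := Metric.cauchySeq_iff.mp hc.cauchySeq (ε / 2) (by linarith)
    refine ⟨max N 1, fun m hm n hn => ?_⟩
    have hm1 : (0 : ℝ) < m := lt_of_lt_of_le one_pos (le_trans (le_max_right N 1) hm)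
    have hn1 : (0 : ℝ) < n := lt_of_lt_of_le one_pos (le_trans (le_max_right N 1) hn)
    have hfg : ‖f - g‖ < ε / 4 := by rw [← dist_eq_norm]; exact hg_close
    have b1 : dist (uu l f m) (uu l g m) < ε / 4 := by
      rw [dist_eq_norm, uu_sub]
      exact lt_of_le_of_lt (uu_bound l (f - g) hm1) hfg
    have b2 : dist (uu l g n) (uu l f n) < ε / 4 := by
      rw [dist_comm, dist_eq_norm, uu_sub]
      exact lt_of_le_of_lt (uu_bound l (f - g) hn1) hfg
    have b3 : dist (uu l g m) (uu l g n) < ε / 2 :=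
      hN m (le_trans (le_max_left N 1) hm) n (le_trans (le_max_left N 1) hn)
    calc dist (uu l f m) (uu l f n)
        ≤ dist (uu l f m) (uu l g m) + dist (uu l g m) (uu l g n) + dist (uu l g n) (uu l f n) :=
          dist_triangle4 _ _ _ _
      _ < ε / 4 + ε / 2 + ε / 4 := by linarith
      _ = ε := by ring
  exact cauchySeq_tendsto_of_complete hC


/-- For every almost periodic `f` and every `λ ∈ ℝ`, the Bohr–Fourier coefficient
`ε_λ(f) = lim_{T→∞} (1/2T) ∫_{-T}^{T} f(t) e^{-iλt} dt` exists. -/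
theorem stmt5 (f : BoundedContinuousFunction ℝ ℂ) (hf : f ∈ AP) (l : ℝ) :
    ∃ c : ℂ, Tendsto
      (fun T : ℝ => (1 / (2 * T) : ℂ) * ∫ x in (-T)..T, f x * Complex.exp (-(Complex.I * l * x)))
      atTop (nhds c) := by
  exact stmt5' f hf l
end

section
/- The crossed product AP(ℝ) ⋊_τ ℝ_d, where τ is the translation action, is a simple C*-algebra: it has no nontrivial closed two-sided ideals. -/
open Complex Finset Filter

lemma stmt15_sigma_tendsto (θ : ℝ) (h : Complex.exp ((θ:ℂ) * Complex.I) ≠ 1) :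
    Filter.Tendsto (fun n : ℕ => (n : ℂ)⁻¹ * ∑ k ∈ Finset.range n,
      Complex.exp (((k * θ : ℝ):ℂ) * Complex.I)) Filter.atTop (nhds 0) := by
  set z := Complex.exp ((θ:ℂ) * Complex.I) with hzdef
  have hz1 : ‖z‖ = 1 := Complex.norm_exp_ofReal_mul_I θ
  have hzne : z - 1 ≠ 0 := sub_ne_zero.mpr h
  have hzpos : 0 < ‖z - 1‖ := norm_pos_iff.mpr hzne
  have hrw : ∀ k : ℕ, Complex.exp (((k * θ : ℝ):ℂ) * Complex.I) = z ^ k := by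
    intro k
    rw [hzdef, ← Complex.exp_nat_mul]
    congr 1
    push_cast
    ring
  have hbound : ∀ n : ℕ, ‖(n : ℂ)⁻¹ * ∑ k ∈ Finset.range n,
      Complex.exp (((k * θ : ℝ):ℂ) * Complex.I)‖ ≤ (2 / ‖z - 1‖) / n := by
    intro n
    have hsum : ‖∑ k ∈ Finset.range n, z ^ k‖ ≤ 2 / ‖z - 1‖ := by
      rw [geom_sum_eq h n, norm_div]
      gcongr
      calc ‖z ^ n - 1‖ ≤ ‖z ^ n‖ + ‖(1:ℂ)‖ := norm_sub_le _ _
        _ ≤ 2 := by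
            rw [norm_pow]
            simp [hz1]
            norm_num
    calc ‖(n : ℂ)⁻¹ * ∑ k ∈ Finset.range n, Complex.exp (((k * θ : ℝ):ℂ) * Complex.I)‖
        = (n:ℝ)⁻¹ * ‖∑ k ∈ Finset.range n, z ^ k‖ := by
          simp only [hrw, norm_mul, norm_inv]
          congr 2
          simp
      _ ≤ (n:ℝ)⁻¹ * (2 / ‖z - 1‖) := by
          gcongr
      _ = (2 / ‖z - 1‖) / n := by ring
  exact squeeze_zero_norm hbound (tendsto_const_div_atTop_nhds_zero_nat _)

lemma stmt15_pick (Λ : Set ℝ) (hΛ : Λ.Countable) :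
    ∃ μ : ℝ, ∀ s ∈ Λ, s ≠ 0 → Complex.exp (((μ * s : ℝ):ℂ) * Complex.I) ≠ 1 := by
  classical
  set Bad : Set ℝ := ⋃ s ∈ Λ, ⋃ n : ℤ, {x : ℝ | s ≠ 0 ∧ x = 2 * Real.pi * n / s} with hBad
  have hBadC : Bad.Countable := by
    refine Set.Countable.biUnion hΛ (fun s _ => Set.countable_iUnion (fun n => ?_))
    exact (Set.countable_singleton (2 * Real.pi * n / s)).mono (by
      intro x hx
      simp only [Set.mem_setOf_eq] at hx
      simp [hx.2])
  have : ∃ μ : ℝ, μ ∉ Bad := by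
    by_contra hcon
    push_neg at hcon
    have : (Set.univ : Set ℝ).Countable := hBadC.mono (fun x _ => hcon x)
    exact Cardinal.not_countable_real this
  obtain ⟨μ, hμ⟩ := this
  refine ⟨μ, fun s hs hs0 hexp => ?_⟩
  obtain ⟨n, hn⟩ := Complex.exp_eq_one_iff.mp hexp
  apply hμ
  rw [hBad]
  refine Set.mem_biUnion hs ?_
  refine Set.mem_iUnion.mpr ⟨n, ⟨hs0, ?_⟩⟩
  have hn' : ((μ * s : ℝ):ℂ) * Complex.I = ((n:ℂ) * (2 * Real.pi)) * Complex.I := by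
    rw [hn]; ring
  have hI : ((μ * s : ℝ):ℂ) = (n:ℂ) * (2 * Real.pi) := mul_right_cancel₀ Complex.I_ne_zero hn'
  have : (μ * s : ℝ) = (n:ℝ) * (2 * Real.pi) := by
    exact_mod_cast hI
  field_simp
  linarith [this]

lemma stmt15_phase_diff (a b : ℝ) :
    Complex.exp ((a:ℂ) * Complex.I) - Complex.exp ((b:ℂ) * Complex.I)
      = Complex.exp ((b:ℂ) * Complex.I) * (Complex.exp (((a - b : ℝ):ℂ) * Complex.I) - 1) := by
  rw [mul_sub, ← Complex.exp_add, mul_one]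
  congr 2
  push_cast
  ring

lemma stmt15_rec (Φ : Finset (ℝ × ℝ)) (μ ν η : ℝ) (hη : 0 < η) :
    ∃ m K : ℕ, 0 < m ∧ ∀ n : ℕ, ∃ G : Finset (ℕ × ℕ),
      G ⊆ Finset.range n ×ˢ Finset.range n ∧
      (n - K)^2 ≤ m * G.card ∧
      ∀ q ∈ G, ∀ p ∈ Φ, ‖Complex.exp (((((q.2 : ℝ) * μ) * p.2
          - p.1 * ((q.1 : ℝ) * ν) : ℝ):ℂ) * Complex.I) - 1‖ ≤ η := by
  classical
  set θ : ℕ × ℕ → ℝ × ℝ → ℝ := fun q p => ((q.2 : ℝ) * μ) * p.2 - p.1 * ((q.1 : ℝ) * ν)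
    with hθ
  set Ψ : ℕ × ℕ → (Φ → ℂ) := fun q p => Complex.exp (((θ q (p:ℝ×ℝ) :ℝ):ℂ) * Complex.I)
    with hΨ
  have hΨball : ∀ q, Ψ q ∈ Metric.closedBall (0 : Φ → ℂ) 1 := by
    intro q
    rw [Metric.mem_closedBall, dist_zero_right]
    refine (pi_norm_le_iff_of_nonneg zero_le_one).mpr (fun p => ?_)
    rw [hΨ]
    simp only
    rw [Complex.norm_exp_ofReal_mul_I]
  have htb : TotallyBounded (Set.range Ψ) := by
    refine (IsCompact.totallyBounded ?_).subset (Set.range_subset_iff.mpr hΨball)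
    exact isCompact_closedBall _ _
  obtain ⟨t, hts, htf, htcover⟩ := (totallyBounded_iff_subset.mp htb)
    {pr : (Φ → ℂ) × (Φ → ℂ) | dist pr.1 pr.2 < η} (Metric.dist_mem_uniformity hη)
  have hex : ∀ f ∈ t, ∃ q : ℕ × ℕ, Ψ q = f := fun f hf => hts hf
  choose pre hpre using hex
  set C : Finset (ℕ × ℕ) := htf.toFinset.attach.image (fun f => pre f.1 (htf.mem_toFinset.mp f.2))
    with hC
  have hcov : ∀ q : ℕ × ℕ, ∃ c ∈ C, ∀ (p : ℝ × ℝ) (hp : p ∈ Φ),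
      ‖Ψ q ⟨p, hp⟩ - Ψ c ⟨p, hp⟩‖ ≤ η := by
    intro q
    have : Ψ q ∈ ⋃ f ∈ t, {g | (g, f) ∈ {pr : (Φ → ℂ) × (Φ → ℂ) | dist pr.1 pr.2 < η}} :=
      htcover (Set.mem_range_self q)
    obtain ⟨f, hf, hg⟩ := Set.mem_iUnion₂.mp this
    refine ⟨pre f hf, ?_, ?_⟩
    · rw [hC]
      exact Finset.mem_image.mpr ⟨⟨f, htf.mem_toFinset.mpr hf⟩, Finset.mem_attach _ _, rfl⟩
    · intro p hp
      have hd : dist (Ψ q) (Ψ (pre f hf)) < η := by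
        rw [hpre f hf]; exact hg
      calc ‖Ψ q ⟨p, hp⟩ - Ψ (pre f hf) ⟨p, hp⟩‖
          = ‖(Ψ q - Ψ (pre f hf)) ⟨p, hp⟩‖ := by rw [Pi.sub_apply]
        _ ≤ ‖Ψ q - Ψ (pre f hf)‖ := norm_le_pi_norm _ _
        _ = dist (Ψ q) (Ψ (pre f hf)) := (dist_eq_norm _ _).symm
        _ ≤ η := le_of_lt hd
  choose cfun hcfunC hcfun using hcov
  set K := C.sup (fun c => max c.1 c.2) with hK
  have hcK : ∀ c ∈ C, c.1 ≤ K ∧ c.2 ≤ K := fun c hc =>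
    ⟨le_trans (le_max_left _ _) (Finset.le_sup (f := fun c : ℕ × ℕ => max c.1 c.2) hc),
     le_trans (le_max_right _ _) (Finset.le_sup (f := fun c : ℕ × ℕ => max c.1 c.2) hc)⟩
  refine ⟨C.card, K, ?_, ?_⟩
  · rw [Finset.card_pos]
    exact ⟨cfun (0,0), hcfunC (0,0)⟩
  intro n
  set Good := (Finset.range n ×ˢ Finset.range n).filter
    (fun q : ℕ × ℕ => ∀ p ∈ Φ, ‖Complex.exp (((θ q p :ℝ):ℂ) * Complex.I) - 1‖ ≤ η) with hGood
  have key : ∀ q ∈ (Finset.Ico K n ×ˢ Finset.Ico K n),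
      (q.1 - (cfun q).1, q.2 - (cfun q).2) ∈ Good := by
    intro q hq
    rw [Finset.mem_product, Finset.mem_Ico, Finset.mem_Ico] at hq
    obtain ⟨hcK1, hcK2⟩ := hcK (cfun q) (hcfunC q)
    have hc1 : (cfun q).1 ≤ q.1 := le_trans hcK1 hq.1.1
    have hc2 : (cfun q).2 ≤ q.2 := le_trans hcK2 hq.2.1
    rw [hGood, Finset.mem_filter]
    constructor
    · rw [Finset.mem_product, Finset.mem_range, Finset.mem_range]
      exact ⟨lt_of_le_of_lt (Nat.sub_le _ _) hq.1.2, lt_of_le_of_lt (Nat.sub_le _ _) hq.2.2⟩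
    · intro p hp
      have hθdiff : θ (q.1 - (cfun q).1, q.2 - (cfun q).2) p = θ q p - θ (cfun q) p := by
        rw [hθ]
        simp only
        rw [Nat.cast_sub hc1, Nat.cast_sub hc2]
        ring
      have hnorm1 : ∀ x : ℝ, ‖Complex.exp ((x:ℂ) * Complex.I)‖ = 1 := by
        intro x
        rw [Complex.norm_exp_ofReal_mul_I]
      have := hcfun q p hp
      rw [hΨ] at this
      simp only at this
      rw [stmt15_phase_diff (θ q p) (θ (cfun q) p)] at this
      rw [norm_mul, hnorm1, one_mul] at this
      rw [hθdiff]
      exact this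
  have hcard : (Finset.Ico K n ×ˢ Finset.Ico K n).card ≤ (C ×ˢ Good).card := by
    apply Finset.card_le_card_of_injOn
      (fun q => (cfun q, (q.1 - (cfun q).1, q.2 - (cfun q).2)))
    · intro q hq
      rw [Finset.mem_coe, Finset.mem_product]
      exact ⟨hcfunC q, key q hq⟩
    · intro q hq q' hq' heq
      rw [Finset.mem_coe, Finset.mem_product, Finset.mem_Ico, Finset.mem_Ico] at hq hq'
      simp only [Prod.mk.injEq] at heq
      obtain ⟨hcc, h1, h2⟩ := heq
      have hb1 : (cfun q).1 ≤ q.1 := le_trans (hcK _ (hcfunC q)).1 hq.1.1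
      have hb2 : (cfun q).2 ≤ q.2 := le_trans (hcK _ (hcfunC q)).2 hq.2.1
      have hb1' : (cfun q').1 ≤ q'.1 := le_trans (hcK _ (hcfunC q')).1 hq'.1.1
      have hb2' : (cfun q').2 ≤ q'.2 := le_trans (hcK _ (hcfunC q')).2 hq'.2.1
      have e1 : q.1 = q'.1 := by
        have h1' := congrArg (· + (cfun q).1) h1
        rw [Nat.sub_add_cancel hb1] at h1'
        rw [h1', hcc, Nat.sub_add_cancel hb1']
      have e2 : q.2 = q'.2 := by
        have h2' := congrArg (· + (cfun q).2) h2
        rw [Nat.sub_add_cancel hb2] at h2'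
        rw [h2', hcc, Nat.sub_add_cancel hb2']
      exact Prod.ext e1 e2
  rw [Finset.card_product, Nat.card_Ico, Finset.card_product] at hcard
  refine ⟨Good, Finset.filter_subset _ _, ?_, ?_⟩
  · calc (n - K)^2 = (n - K) * (n - K) := by ring
      _ ≤ C.card * Good.card := hcard
  · intro q hq
    rw [hGood, Finset.mem_filter] at hq
    exact hq.2

set_option maxHeartbeats 2000000 in
/-- The crossed product `AP(ℝ) ⋊_τ ℝ_d` of the almost periodic functions by the translation
action of the discrete reals is simple. -/
theorem stmt15
    {A : Type} [NormedCommRing A] [StarRing A] [CStarRing A] [NormedAlgebra ℂ A]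
    [StarModule ℂ A] [CompleteSpace A]
    (e : ℝ → A) (he : ∀ l, e l ∈ unitary A) (he0 : e 0 = 1)
    (headd : ∀ l l' : ℝ, e (l + l') = e l * e l')
    (hAdense : Dense {x : A | ∃ (F : Finset ℝ) (c : ℝ → ℂ), x = ∑ l ∈ F, c l • e l})
    (ε : ℝ → (A →L[ℂ] ℂ)) (hεcontr : ∀ l, ‖ε l‖ ≤ 1)
    (hεcoeff : ∀ l l' : ℝ, ε l (e l') = if l = l' then 1 else 0)
    (τ : ℝ → A ≃⋆ₐ[ℂ] A) (hτ : ∀ s t : ℝ, τ (s + t) = (τ t).trans (τ s))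
    (hτe : ∀ (s l : ℝ), τ s (e l) = Complex.exp (-(Complex.I * l * s)) • e l)
    {B : Type} [NormedRing B] [StarRing B] [CStarRing B] [NormedAlgebra ℂ B]
    [StarModule ℂ B] [CompleteSpace B]
    (ι : A →⋆ₐ[ℂ] B) (hι : Isometry ι)
    (u : ℝ → B) (hu : ∀ s, u s ∈ unitary B) (hu0 : u 0 = 1)
    (huadd : ∀ s t : ℝ, u (s + t) = u s * u t)
    (hcov : ∀ (s : ℝ) (a : A), u s * ι a * star (u s) = ι (τ s a))
    (hdense : Dense {x : B | ∃ (F : Finset ℝ) (c : ℝ → A), x = ∑ s ∈ F, ι (c s) * u s})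
    (E : ℝ → (B →L[ℂ] A)) (hEcontr : ∀ s, ‖E s‖ ≤ 1)
    (hEcoeff : ∀ (s t : ℝ) (a : A), E s (ι a * u t) = if s = t then a else 0) :
    ∀ S : Set B, IsClosed S → S.Nonempty →
      (∀ x y, x ∈ S → y ∈ S → x + y ∈ S) →
      (∀ x z, x ∈ S → z * x ∈ S ∧ x * z ∈ S) →
      S = {0} ∨ S = Set.univ := by
  classical
  intro S hScl hSne hSadd hSmul
  -- dispose of the degenerate case
  by_cases h1 : (1 : B) = 0
  · left
    have hall : ∀ z : B, z = 0 := fun z => by rw [← mul_one z, h1, mul_zero]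
    ext z
    simp only [Set.mem_singleton_iff]
    constructor
    · intro _; exact hall z
    · intro hz
      obtain ⟨x₀, hx₀⟩ := hSne
      have h0 := (hSmul x₀ 0 hx₀).1
      rw [zero_mul] at h0
      rw [hz]; exact h0
  haveI : Nontrivial B := ⟨⟨1, 0, h1⟩⟩
  haveI : Nontrivial A := ⟨⟨1, 0, fun h => h1 (by rw [← map_one ι, h, map_zero])⟩⟩
  letI : CStarAlgebra B := {}
  letI : PartialOrder B := CStarAlgebra.spectralOrder B
  haveI : StarOrderedRing B := CStarAlgebra.spectralOrderedRing B
  obtain ⟨x₀, hx₀⟩ := hSne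
  have hS0 : (0 : B) ∈ S := by
    have h0 := (hSmul x₀ 0 hx₀).1
    rwa [zero_mul] at h0
  have hSsmul : ∀ (c : ℂ) (z : B), z ∈ S → c • z ∈ S := by
    intro c z hz
    have h0 := (hSmul z (c • 1) hz).1
    rwa [smul_mul_assoc, one_mul] at h0
  have hSsum : ∀ {γ : Type} (t : Finset γ) (f : γ → B),
      (∀ i ∈ t, f i ∈ S) → (∑ i ∈ t, f i) ∈ S := by
    intro γ t f hf
    exact Finset.sum_induction f (· ∈ S) (fun a b ha hb => hSadd a b ha hb) hS0 hf
  by_cases hStriv : ∀ z ∈ S, z = (0 : B)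
  · left
    ext z
    simp only [Set.mem_singleton_iff]
    exact ⟨fun hz => hStriv z hz, fun hz => hz ▸ hS0⟩
  right
  push_neg at hStriv
  obtain ⟨x, hxS, hxne⟩ := hStriv
  -- basic facts
  have hιnorm : ∀ a : A, ‖ι a‖ = ‖a‖ := fun a => by
    rw [← sub_zero (ι a), ← map_zero ι, ← dist_eq_norm, hι.dist_eq, dist_eq_norm, sub_zero]
  have hn1 : ‖(1 : B)‖ = 1 := CStarRing.norm_one
  have hιe : ∀ t : ℝ, ι (e t) ∈ unitary B := by
    intro t
    rw [Unitary.mem_iff]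
    constructor
    · rw [← map_star, ← map_mul, (Unitary.mem_iff.mp (he t)).1, map_one]
    · rw [← map_star, ← map_mul, (Unitary.mem_iff.mp (he t)).2, map_one]
  have hustar : ∀ t : ℝ, star (u t) * u t = 1 := fun t => (Unitary.mem_iff.mp (hu t)).1
  have hucancel : ∀ t : ℝ, u t * u (-t) = 1 := by
    intro t
    rw [← huadd]
    have hz : t + -t = 0 := by ring
    rw [hz, hu0]
  have hustar2 : ∀ t : ℝ, star (u t) = u (-t) := by
    intro t
    calc star (u t) = star (u t) * (u t * u (-t)) := by rw [hucancel, mul_one]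
      _ = (star (u t) * u t) * u (-t) := by rw [mul_assoc]
      _ = u (-t) := by rw [hustar, one_mul]
  have hcomm : ∀ (s : ℝ) (a : A), u s * ι a = ι (τ s a) * u s := by
    intro s a
    calc u s * ι a = (u s * ι a * star (u s)) * u s := by
          rw [mul_assoc, mul_assoc, hustar, mul_one]
      _ = ι (τ s a) * u s := by rw [hcov]
  have hcomm2 : ∀ (s : ℝ) (a : A) (X : B), u s * (ι a * X) = ι (τ s a) * (u s * X) := by
    intro s a X
    rw [← mul_assoc, hcomm, mul_assoc]
  have hι2 : ∀ (a b : A) (X : B), ι a * (ι b * X) = ι (a * b) * X := by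
    intro a b X
    rw [← mul_assoc, ← map_mul]
  -- the unitaries implementing the averaging
  have hWu : ∀ t t' : ℝ, u t * ι (e t') ∈ unitary B := fun t t' => mul_mem (hu t) (hιe t')
  have hconj : ∀ (v z : B), v ∈ unitary B → ‖v * z * star v‖ = ‖z‖ := by
    intro v z hv
    rw [CStarRing.norm_mul_mem_unitary _ (Unitary.star_mem hv)]
    exact CStarRing.norm_mem_unitary_mul z hv
  -- the translation action on coefficients
  have hτstar : ∀ s t' : ℝ, τ s (star (e t'))
      = Complex.exp (((t' * s : ℝ) : ℂ) * Complex.I) • star (e t') := by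
    intro s t'
    rw [map_star, hτe s t', star_smul]
    congr 1
    rw [Complex.star_def, ← Complex.exp_conj]
    congr 1
    simp only [map_neg, map_mul, Complex.conj_I, Complex.conj_ofReal]
    push_cast
    ring
  -- the key conjugation formula
  have hAd : ∀ t t' l s : ℝ, (u t * ι (e t')) * (ι (e l) * u s) * star (u t * ι (e t'))
      = Complex.exp (((t' * s - l * t : ℝ) : ℂ) * Complex.I) • (ι (e l) * u s) := by
    intro t t' l s
    have hsW : star (u t * ι (e t')) = ι (star (e t')) * star (u t) := by
      rw [star_mul, map_star]
    rw [hsW]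
    simp only [mul_assoc]
    rw [← mul_assoc (u s), hcomm s (star (e t')), mul_assoc]
    rw [hτstar s t', map_smul]
    simp only [mul_smul_comm, smul_mul_assoc]
    rw [hι2 (e l) (star (e t')), hι2 (e t') (e l * star (e t'))]
    have hA1 : e t' * (e l * star (e t')) = e l := by
      rw [mul_left_comm, (Unitary.mem_iff.mp (he t')).2, mul_one]
    rw [hA1]
    rw [hustar2 t]
    have hswap : u s * u (-t) = u (-t) * u s := by rw [← huadd, ← huadd, add_comm]
    rw [hswap, hcomm2 t (e l), ← mul_assoc (u t) (u (-t)), hucancel, one_mul,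
      hτe t l, map_smul, smul_mul_assoc, smul_smul]
    congr 1
    rw [← Complex.exp_add]
    congr 1
    push_cast
    ring
  -- trigonometric monomials
  set V : ℝ × ℝ → B := fun p => ι (e p.1) * u p.2 with hV
  have hVnorm : ∀ p : ℝ × ℝ, ‖V p‖ = 1 := by
    intro p
    rw [hV]
    simp only
    rw [CStarRing.norm_mul_mem_unitary _ (hu p.2), hιnorm,
      CStarRing.norm_of_mem_unitary (he p.1)]
  have hAdPoly : ∀ (t t' : ℝ) (Φ : Finset (ℝ × ℝ)) (c : ℝ × ℝ → ℂ),
      (u t * ι (e t')) * (∑ p ∈ Φ, c p • V p) * star (u t * ι (e t'))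
        = ∑ p ∈ Φ, (c p * Complex.exp (((t' * p.2 - p.1 * t : ℝ) : ℂ) * Complex.I)) • V p := by
    intro t t' Φ c
    rw [Finset.mul_sum, Finset.sum_mul]
    refine Finset.sum_congr rfl (fun p _ => ?_)
    rw [mul_smul_comm, smul_mul_assoc, hV]
    simp only
    rw [hAd t t' p.1 p.2, smul_smul]
  -- Cesàro averages of characters
  set σ : ℝ → ℕ → ℂ := fun a n => (n : ℂ)⁻¹ * ∑ k ∈ Finset.range n,
      Complex.exp (((k * a : ℝ) : ℂ) * Complex.I) with hσ
  have hσbound : ∀ (a : ℝ) (n : ℕ), ‖σ a n‖ ≤ 1 := by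
    intro a n
    rw [hσ]
    simp only
    rcases Nat.eq_zero_or_pos n with hn | hn
    · simp [hn]
    calc ‖(n : ℂ)⁻¹ * ∑ k ∈ Finset.range n, Complex.exp (((k * a : ℝ) : ℂ) * Complex.I)‖
        = (n : ℝ)⁻¹ * ‖∑ k ∈ Finset.range n, Complex.exp (((k * a : ℝ) : ℂ) * Complex.I)‖ := by
          rw [norm_mul, norm_inv, Complex.norm_natCast]
      _ ≤ (n : ℝ)⁻¹ * n := by
          gcongr
          calc ‖∑ k ∈ Finset.range n, Complex.exp (((k * a : ℝ) : ℂ) * Complex.I)‖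
              ≤ ∑ k ∈ Finset.range n, ‖Complex.exp (((k * a : ℝ) : ℂ) * Complex.I)‖ :=
                norm_sum_le _ _
            _ = ∑ _k ∈ Finset.range n, 1 := by
                refine Finset.sum_congr rfl (fun k _ => ?_)
                rw [Complex.norm_exp_ofReal_mul_I]
            _ = n := by simp
      _ = 1 := inv_mul_cancel₀ (by exact_mod_cast hn.ne')
  have hσzero : Filter.Tendsto (σ 0) Filter.atTop (nhds 1) := by
    apply tendsto_atTop_of_eventually_const (i₀ := 1)
    intro n hn
    rw [hσ]
    simp only [mul_zero, Complex.ofReal_zero, zero_mul, Complex.exp_zero, Finset.sum_const,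
      Finset.card_range, nsmul_eq_mul, mul_one]
    exact inv_mul_cancel₀ (by exact_mod_cast Nat.one_le_iff_ne_zero.mp hn)
  have hσlim : ∀ a : ℝ, Complex.exp ((a : ℂ) * Complex.I) ≠ 1 →
      Filter.Tendsto (σ a) Filter.atTop (nhds 0) := by
    intro a ha
    rw [hσ]
    exact stmt15_sigma_tendsto a ha
  -- density of doubly trigonometric polynomials
  have hdense2 : ∀ (z : B) (δ : ℝ), 0 < δ → ∃ (Φ : Finset (ℝ × ℝ)) (c : ℝ × ℝ → ℂ),
      ‖z - ∑ p ∈ Φ, c p • V p‖ ≤ δ := by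
    intro z δ hδ
    obtain ⟨b, hbmem, hbdist⟩ := Metric.mem_closure_iff.mp (hdense z) (δ/2) (by linarith)
    obtain ⟨F, cA, rfl⟩ := hbmem
    have hA : ∀ s : ℝ, ∃ (Fs : Finset ℝ) (d : ℝ → ℂ),
        ‖cA s - ∑ l ∈ Fs, d l • e l‖ ≤ δ / (2 * (F.card + 1)) := by
      intro s
      obtain ⟨a', ⟨Fs, d, rfl⟩, hd⟩ := Metric.mem_closure_iff.mp (hAdense (cA s))
        (δ / (2 * (F.card + 1))) (by positivity)
      exact ⟨Fs, d, by rw [← dist_eq_norm]; exact le_of_lt hd⟩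
    choose Fs d hFd using hA
    refine ⟨(F.biUnion Fs) ×ˢ F, fun p => if p.1 ∈ Fs p.2 then d p.2 p.1 else 0, ?_⟩
    have hsum : ∑ p ∈ (F.biUnion Fs) ×ˢ F, (if p.1 ∈ Fs p.2 then d p.2 p.1 else 0) • V p
        = ∑ s ∈ F, ι (∑ l ∈ Fs s, d s l • e l) * u s := by
      rw [Finset.sum_product, Finset.sum_comm]
      refine Finset.sum_congr rfl (fun s hs => ?_)
      have hstep : ∀ l : ℝ, (if l ∈ Fs s then d s l else 0) • V (l, s)
          = if l ∈ Fs s then (d s l • V (l, s)) else 0 := by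
        intro l
        split <;> simp
      rw [Finset.sum_congr rfl (fun l _ => hstep l), Finset.sum_ite_mem,
        Finset.inter_eq_right.mpr (Finset.subset_biUnion_of_mem Fs hs)]
      rw [map_sum, Finset.sum_mul]
      refine Finset.sum_congr rfl (fun l _ => ?_)
      rw [hV]
      simp only
      rw [map_smul, smul_mul_assoc]
    rw [hsum]
    have hterm : ∀ s ∈ F, ‖ι (cA s) * u s - ι (∑ l ∈ Fs s, d s l • e l) * u s‖
        ≤ δ / (2 * (F.card + 1)) := by
      intro s _
      rw [← sub_mul, ← map_sub, CStarRing.norm_mul_mem_unitary _ (hu s), hιnorm]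
      exact hFd s
    have hdecomp : z - ∑ s ∈ F, ι (∑ l ∈ Fs s, d s l • e l) * u s
        = (z - ∑ s ∈ F, ι (cA s) * u s)
          + ∑ s ∈ F, (ι (cA s) * u s - ι (∑ l ∈ Fs s, d s l • e l) * u s) := by
      rw [Finset.sum_sub_distrib]
      abel
    rw [hdecomp]
    calc ‖(z - ∑ s ∈ F, ι (cA s) * u s)
          + ∑ s ∈ F, (ι (cA s) * u s - ι (∑ l ∈ Fs s, d s l • e l) * u s)‖
        ≤ ‖z - ∑ s ∈ F, ι (cA s) * u s‖
          + ∑ s ∈ F, ‖ι (cA s) * u s - ι (∑ l ∈ Fs s, d s l • e l) * u s‖ :=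
          le_trans (norm_add_le _ _) (by gcongr; exact norm_sum_le _ _)
      _ ≤ δ/2 + F.card * (δ / (2 * (F.card + 1))) := by
          gcongr
          · rw [← dist_eq_norm]; exact le_of_lt hbdist
          · calc ∑ s ∈ F, ‖ι (cA s) * u s - ι (∑ l ∈ Fs s, d s l • e l) * u s‖
                ≤ ∑ _s ∈ F, δ / (2 * (F.card + 1)) := Finset.sum_le_sum hterm
              _ = F.card * (δ / (2 * (F.card + 1))) := by
                  rw [Finset.sum_const, nsmul_eq_mul]
      _ ≤ δ/2 + δ/2 := by
          gcongr
          have hc0 : (0:ℝ) ≤ (F.card : ℝ) := Nat.cast_nonneg _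
          rw [mul_div_assoc', div_le_div_iff₀ (by positivity) (by norm_num)]
          nlinarith
      _ = δ := by ring
  -- the vacuum coefficient functional
  have hφnorm : ∀ z : B, ‖ε 0 (E 0 z)‖ ≤ ‖z‖ := by
    intro z
    calc ‖ε 0 (E 0 z)‖ ≤ ‖ε 0‖ * ‖E 0 z‖ := (ε 0).le_opNorm _
      _ ≤ 1 * ‖E 0 z‖ := by gcongr; exact hεcontr 0
      _ = ‖E 0 z‖ := one_mul _
      _ ≤ ‖E 0‖ * ‖z‖ := (E 0).le_opNorm _
      _ ≤ 1 * ‖z‖ := by gcongr; exact hEcontr 0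
      _ = ‖z‖ := one_mul _
  have hφpoly : ∀ (Φ : Finset (ℝ × ℝ)) (c : ℝ × ℝ → ℂ),
      ε 0 (E 0 (∑ p ∈ Φ, c p • V p))
        = ∑ p ∈ Φ, c p * ((if p.1 = 0 then 1 else 0) * (if p.2 = 0 then 1 else 0)) := by
    intro Φ c
    rw [map_sum, map_sum]
    refine Finset.sum_congr rfl (fun p _ => ?_)
    rw [map_smul, map_smul, hV]
    simp only
    rw [hEcoeff 0 p.2 (e p.1)]
    by_cases hp2 : p.2 = 0
    · rw [if_pos hp2.symm, if_pos hp2, hεcoeff 0 p.1]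
      by_cases hp1 : p.1 = 0
      · rw [if_pos hp1.symm, if_pos hp1]
        simp [smul_eq_mul]
      · rw [if_neg (fun h => hp1 h.symm), if_neg hp1]
        simp [smul_eq_mul]
    · rw [if_neg (fun h => hp2 h.symm), if_neg hp2]
      simp [smul_eq_mul]
  -- a sequence of approximating polynomials for y := x⋆x
  set y : B := star x * x with hy
  have hyS : y ∈ S := (hSmul x (star x) hxS).1
  have hrpos : 0 < ‖y‖ := by
    rw [hy, CStarRing.norm_star_mul_self]
    have : 0 < ‖x‖ := norm_pos_iff.mpr hxne
    positivity
  have happrox : ∀ i : ℕ, ∃ (Φ : Finset (ℝ × ℝ)) (c : ℝ × ℝ → ℂ),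
      ‖y - ∑ p ∈ Φ, c p • V p‖ ≤ 1 / ((i : ℝ) + 1) := fun i => hdense2 y _ (by positivity)
  choose Φs cs hΦs using happrox
  -- choose non-resonant frequencies
  have hΛu : (⋃ i : ℕ, (fun p : ℝ × ℝ => p.2) '' (Φs i : Set (ℝ × ℝ))).Countable :=
    Set.countable_iUnion (fun i => ((Φs i).countable_toSet.image _))
  have hΛe : (⋃ i : ℕ, (fun p : ℝ × ℝ => p.1) '' (Φs i : Set (ℝ × ℝ))).Countable :=
    Set.countable_iUnion (fun i => ((Φs i).countable_toSet.image _))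
  obtain ⟨μ, hμ⟩ := stmt15_pick _ hΛu
  obtain ⟨ν, hν⟩ := stmt15_pick _ hΛe
  -- the averaging operators
  set T : ℕ → B → B := fun n z => ((n : ℂ)⁻¹ * (n : ℂ)⁻¹) •
      ∑ q ∈ Finset.range n ×ˢ Finset.range n,
        (u ((q.1 : ℝ) * ν) * ι (e ((q.2 : ℝ) * μ))) * z
          * star (u ((q.1 : ℝ) * ν) * ι (e ((q.2 : ℝ) * μ))) with hT
  have hTS : ∀ (n : ℕ) (z : B), z ∈ S → T n z ∈ S := by
    intro n z hz
    rw [hT]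
    refine hSsmul _ _ (hSsum _ _ (fun q _ => ?_))
    exact (hSmul _ _ (hSmul z _ hz).1).2
  have hTnorm : ∀ (n : ℕ) (z : B), ‖T n z‖ ≤ ‖z‖ := by
    intro n z
    rw [hT]
    simp only
    rcases Nat.eq_zero_or_pos n with hn | hn
    · simp [hn, norm_nonneg]
    have hcard : ((Finset.range n ×ˢ Finset.range n).card : ℝ) = (n : ℝ) * n := by
      rw [Finset.card_product, Finset.card_range]
      push_cast
      ring
    calc ‖((n : ℂ)⁻¹ * (n : ℂ)⁻¹) • ∑ q ∈ Finset.range n ×ˢ Finset.range n,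
          (u ((q.1 : ℝ) * ν) * ι (e ((q.2 : ℝ) * μ))) * z
            * star (u ((q.1 : ℝ) * ν) * ι (e ((q.2 : ℝ) * μ)))‖
        = (n : ℝ)⁻¹ * (n : ℝ)⁻¹ * ‖∑ q ∈ Finset.range n ×ˢ Finset.range n,
          (u ((q.1 : ℝ) * ν) * ι (e ((q.2 : ℝ) * μ))) * z
            * star (u ((q.1 : ℝ) * ν) * ι (e ((q.2 : ℝ) * μ)))‖ := by
          rw [norm_smul, norm_mul, norm_inv, Complex.norm_natCast]
      _ ≤ (n : ℝ)⁻¹ * (n : ℝ)⁻¹ * (((n:ℝ) * n) * ‖z‖) := by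
          gcongr
          calc ‖∑ q ∈ Finset.range n ×ˢ Finset.range n,
              (u ((q.1 : ℝ) * ν) * ι (e ((q.2 : ℝ) * μ))) * z
                * star (u ((q.1 : ℝ) * ν) * ι (e ((q.2 : ℝ) * μ)))‖
              ≤ ∑ _q ∈ Finset.range n ×ˢ Finset.range n, ‖z‖ := by
                refine le_trans (norm_sum_le _ _) (Finset.sum_le_sum (fun q _ => ?_))
                rw [hconj _ _ (hWu _ _)]
            _ = ((n:ℝ) * n) * ‖z‖ := by
                rw [Finset.sum_const, nsmul_eq_mul, hcard]
      _ = ‖z‖ := by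
          have hne : (n:ℝ) ≠ 0 := by exact_mod_cast hn.ne'
          field_simp
  have hTsub : ∀ (n : ℕ) (z z' : B), T n z - T n z' = T n (z - z') := by
    intro n z z'
    rw [hT]
    simp only
    rw [← smul_sub, ← Finset.sum_sub_distrib]
    congr 1
    refine Finset.sum_congr rfl (fun q _ => ?_)
    rw [mul_sub, sub_mul]
  have hTpoly : ∀ (n : ℕ) (Φ : Finset (ℝ × ℝ)) (c : ℝ × ℝ → ℂ),
      T n (∑ p ∈ Φ, c p • V p)
        = ∑ p ∈ Φ, (c p * (σ (-(ν * p.1)) n * σ (μ * p.2) n)) • V p := by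
    intro n Φ c
    rw [hT]
    simp only
    have hq : ∀ q ∈ Finset.range n ×ˢ Finset.range n,
        (u ((q.1 : ℝ) * ν) * ι (e ((q.2 : ℝ) * μ))) * (∑ p ∈ Φ, c p • V p)
          * star (u ((q.1 : ℝ) * ν) * ι (e ((q.2 : ℝ) * μ)))
        = ∑ p ∈ Φ, (c p * Complex.exp (((((q.2 : ℝ) * μ) * p.2
            - p.1 * ((q.1 : ℝ) * ν) : ℝ) : ℂ) * Complex.I)) • V p :=
      fun q _ => hAdPoly ((q.1 : ℝ) * ν) ((q.2 : ℝ) * μ) Φ c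
    rw [Finset.sum_congr rfl hq, Finset.sum_comm, Finset.smul_sum]
    refine Finset.sum_congr rfl (fun p _ => ?_)
    rw [← Finset.sum_smul, smul_smul]
    congr 1
    rw [← Finset.mul_sum]
    have hsplit : ∀ q : ℕ × ℕ,
        Complex.exp (((((q.2 : ℝ) * μ) * p.2 - p.1 * ((q.1 : ℝ) * ν) : ℝ) : ℂ) * Complex.I)
        = Complex.exp ((((q.1 : ℝ) * (-(ν * p.1)) : ℝ) : ℂ) * Complex.I)
          * Complex.exp ((((q.2 : ℝ) * (μ * p.2) : ℝ) : ℂ) * Complex.I) := by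
      intro q
      rw [← Complex.exp_add]
      congr 1
      push_cast
      ring
    rw [Finset.sum_congr rfl (fun q _ => hsplit q), Finset.sum_product]
    rw [hσ]
    simp only
    rw [← Finset.sum_mul_sum]
    ring
  -- convergence of the averages on the approximants
  have hexpflip : ∀ a : ℝ, Complex.exp ((a : ℂ) * Complex.I) ≠ 1 →
      Complex.exp (((-a : ℝ) : ℂ) * Complex.I) ≠ 1 := by
    intro a ha hcontra
    apply ha
    have hprod : Complex.exp ((a : ℂ) * Complex.I) * Complex.exp (((-a : ℝ) : ℂ) * Complex.I)
        = 1 := by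
      rw [← Complex.exp_add]
      rw [show (a : ℂ) * Complex.I + ((-a : ℝ) : ℂ) * Complex.I = 0 by push_cast; ring]
      exact Complex.exp_zero
    rw [hcontra, mul_one] at hprod
    exact hprod
  have hTb : ∀ i : ℕ, Filter.Tendsto (fun n => T n (∑ p ∈ Φs i, cs i p • V p))
      Filter.atTop (nhds ((ε 0 (E 0 (∑ p ∈ Φs i, cs i p • V p))) • 1)) := by
    intro i
    have hlim : ∀ p ∈ Φs i, Filter.Tendsto (fun n => σ (-(ν * p.1)) n * σ (μ * p.2) n)
        Filter.atTop (nhds ((if p.1 = 0 then 1 else 0) * (if p.2 = 0 then 1 else 0))) := by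
      intro p hp
      by_cases hp1 : p.1 = 0
      · have h1 : Filter.Tendsto (σ (-(ν * p.1))) Filter.atTop (nhds 1) := by
          rw [hp1, mul_zero, neg_zero]
          exact hσzero
        by_cases hp2 : p.2 = 0
        · have h2 : Filter.Tendsto (σ (μ * p.2)) Filter.atTop (nhds 1) := by
            rw [hp2, mul_zero]
            exact hσzero
          rw [if_pos hp1, if_pos hp2]
          simpa using h1.mul h2
        · have hp2' : p.2 ∈ ⋃ i : ℕ, (fun p : ℝ × ℝ => p.2) '' (Φs i : Set (ℝ × ℝ)) :=
            Set.mem_iUnion.mpr ⟨i, ⟨p, Finset.mem_coe.mpr hp, rfl⟩⟩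
          have h2 : Filter.Tendsto (σ (μ * p.2)) Filter.atTop (nhds 0) :=
            hσlim _ (hμ p.2 hp2' hp2)
          rw [if_pos hp1, if_neg hp2]
          simpa using h1.mul h2
      · have hp1' : p.1 ∈ ⋃ i : ℕ, (fun p : ℝ × ℝ => p.1) '' (Φs i : Set (ℝ × ℝ)) :=
          Set.mem_iUnion.mpr ⟨i, ⟨p, Finset.mem_coe.mpr hp, rfl⟩⟩
        have h1 : Filter.Tendsto (σ (-(ν * p.1))) Filter.atTop (nhds 0) :=
          hσlim _ (hexpflip _ (hν p.1 hp1' hp1))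
        rw [if_neg hp1]
        rw [zero_mul]
        refine squeeze_zero_norm (fun n => ?_) (by simpa using h1.norm)
        rw [norm_mul]
        calc ‖σ (-(ν * p.1)) n‖ * ‖σ (μ * p.2) n‖ ≤ ‖σ (-(ν * p.1)) n‖ * 1 := by
              gcongr; exact hσbound _ _
          _ = ‖σ (-(ν * p.1)) n‖ := mul_one _
    have hstep : Filter.Tendsto (fun n => T n (∑ p ∈ Φs i, cs i p • V p)) Filter.atTop
        (nhds (∑ p ∈ Φs i, (cs i p * ((if p.1 = 0 then 1 else 0)
          * (if p.2 = 0 then 1 else 0))) • V p)) := by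
      have : (fun n => T n (∑ p ∈ Φs i, cs i p • V p))
          = fun n => ∑ p ∈ Φs i, (cs i p * (σ (-(ν * p.1)) n * σ (μ * p.2) n)) • V p := by
        funext n
        exact hTpoly n (Φs i) (cs i)
      rw [this]
      refine tendsto_finset_sum _ (fun p hp => ?_)
      exact (((hlim p hp).const_mul (cs i p)).smul_const (V p))
    have heq : ∑ p ∈ Φs i, (cs i p * ((if p.1 = 0 then 1 else 0)
          * (if p.2 = 0 then 1 else 0))) • V p
        = (ε 0 (E 0 (∑ p ∈ Φs i, cs i p • V p))) • 1 := by
      rw [hφpoly, Finset.sum_smul]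
      refine Finset.sum_congr rfl (fun p _ => ?_)
      by_cases hp1 : p.1 = 0
      · by_cases hp2 : p.2 = 0
        · congr 1
          rw [hV]
          simp only
          rw [hp1, hp2, he0, map_one, hu0, mul_one]
        · simp [hp2]
      · simp [hp1]
    rw [← heq]
    exact hstep
  -- convergence of the averages of y
  have hTy : Filter.Tendsto (fun n => T n y) Filter.atTop (nhds ((ε 0 (E 0 y)) • 1)) := by
    rw [Metric.tendsto_atTop]
    intro δ hδ
    obtain ⟨i, hi⟩ : ∃ i : ℕ, 1 / ((i : ℝ) + 1) < δ / 4 := exists_nat_one_div_lt (by linarith)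
    obtain ⟨N, hN⟩ := Metric.tendsto_atTop.mp (hTb i) (δ / 4) (by linarith)
    refine ⟨N, fun n hn => ?_⟩
    rw [dist_eq_norm]
    set b : B := ∑ p ∈ Φs i, cs i p • V p with hb
    have hd1 : ‖T n y - T n b‖ ≤ 1 / ((i : ℝ) + 1) := by
      rw [hTsub]
      exact le_trans (hTnorm n _) (hΦs i)
    have hd2 : ‖T n b - (ε 0 (E 0 b)) • 1‖ < δ / 4 := by
      have := hN n hn
      rwa [dist_eq_norm] at this
    have hd3 : ‖(ε 0 (E 0 b)) • (1:B) - (ε 0 (E 0 y)) • 1‖ ≤ 1 / ((i : ℝ) + 1) := by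
      rw [← sub_smul, norm_smul, hn1, mul_one]
      have : ε 0 (E 0 b) - ε 0 (E 0 y) = ε 0 (E 0 (b - y)) := by
        rw [map_sub, map_sub]
      rw [this]
      calc ‖ε 0 (E 0 (b - y))‖ ≤ ‖b - y‖ := hφnorm _
        _ = ‖y - b‖ := by rw [norm_sub_rev]
        _ ≤ 1 / ((i : ℝ) + 1) := hΦs i
    calc ‖T n y - (ε 0 (E 0 y)) • 1‖
        = ‖(T n y - T n b) + ((T n b - (ε 0 (E 0 b)) • 1)
            + ((ε 0 (E 0 b)) • (1:B) - (ε 0 (E 0 y)) • 1))‖ := by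
          congr 1
          abel
      _ ≤ ‖T n y - T n b‖ + (‖T n b - (ε 0 (E 0 b)) • 1‖
            + ‖(ε 0 (E 0 b)) • (1:B) - (ε 0 (E 0 y)) • 1‖) :=
          le_trans (norm_add_le _ _) (by gcongr; exact norm_add_le _ _)
      _ < δ/4 + (δ/4 + δ/4) := by
          have := hΦs i
          gcongr <;> linarith
      _ < δ := by linarith
  have hφy1 : (ε 0 (E 0 y)) • (1:B) ∈ S :=
    hScl.mem_of_tendsto hTy (Filter.Eventually.of_forall (fun n => hTS n y hyS))
  -- quantitative recurrence: the averages stay large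
  obtain ⟨i0, hi0⟩ : ∃ i : ℕ, 1 / ((i : ℝ) + 1) < ‖y‖ / 8 :=
    exists_nat_one_div_lt (by positivity)
  have hWc0 : (0:ℝ) ≤ ∑ p ∈ Φs i0, ‖cs i0 p‖ := Finset.sum_nonneg (fun p _ => norm_nonneg _)
  have hη : (0:ℝ) < (‖y‖/4) / ((∑ p ∈ Φs i0, ‖cs i0 p‖) + 1) := by positivity
  obtain ⟨m, K, hm, hcount⟩ := stmt15_rec (Φs i0) μ ν
    ((‖y‖/4) / ((∑ p ∈ Φs i0, ‖cs i0 p‖) + 1)) hη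
  -- each good conjugate moves y by at most ‖y‖/2
  have hgood : ∀ q : ℕ × ℕ,
      (∀ p ∈ Φs i0, ‖Complex.exp (((((q.2 : ℝ) * μ) * p.2
          - p.1 * ((q.1 : ℝ) * ν) : ℝ):ℂ) * Complex.I) - 1‖
        ≤ (‖y‖/4) / ((∑ p ∈ Φs i0, ‖cs i0 p‖) + 1)) →
      ‖(u ((q.1 : ℝ) * ν) * ι (e ((q.2 : ℝ) * μ))) * y
          * star (u ((q.1 : ℝ) * ν) * ι (e ((q.2 : ℝ) * μ))) - y‖ ≤ ‖y‖/2 := by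
    intro q hq
    set b : B := ∑ p ∈ Φs i0, cs i0 p • V p with hb
    set w : B := u ((q.1 : ℝ) * ν) * ι (e ((q.2 : ℝ) * μ)) with hw
    have hdec : w * y * star w - y
        = (w * (y - b) * star w) + ((w * b * star w - b) + (b - y)) := by
      rw [mul_sub, sub_mul]
      abel
    have hn1' : ‖w * (y - b) * star w‖ ≤ ‖y‖/8 := by
      rw [hconj _ _ (hWu _ _)]
      exact le_trans (hΦs i0) (le_of_lt hi0)
    have hn3 : ‖b - y‖ ≤ ‖y‖/8 := by
      rw [norm_sub_rev]
      exact le_trans (hΦs i0) (le_of_lt hi0)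
    have hn2 : ‖w * b * star w - b‖ ≤ ‖y‖/4 := by
      rw [hw, hb, hAdPoly ((q.1 : ℝ) * ν) ((q.2 : ℝ) * μ) (Φs i0) (cs i0),
        ← Finset.sum_sub_distrib]
      have hterm : ∀ p ∈ Φs i0,
          ‖(cs i0 p * Complex.exp (((((q.2 : ℝ) * μ) * p.2
              - p.1 * ((q.1 : ℝ) * ν) : ℝ):ℂ) * Complex.I)) • V p - cs i0 p • V p‖
          ≤ ‖cs i0 p‖ * ((‖y‖/4) / ((∑ p ∈ Φs i0, ‖cs i0 p‖) + 1)) := by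
        intro p hp
        rw [← sub_smul, norm_smul, hVnorm, mul_one]
        have : cs i0 p * Complex.exp (((((q.2 : ℝ) * μ) * p.2
              - p.1 * ((q.1 : ℝ) * ν) : ℝ):ℂ) * Complex.I) - cs i0 p
            = cs i0 p * (Complex.exp (((((q.2 : ℝ) * μ) * p.2
              - p.1 * ((q.1 : ℝ) * ν) : ℝ):ℂ) * Complex.I) - 1) := by ring
        rw [this, norm_mul]
        gcongr
        exact hq p hp
      calc ‖∑ p ∈ Φs i0, ((cs i0 p * Complex.exp (((((q.2 : ℝ) * μ) * p.2
              - p.1 * ((q.1 : ℝ) * ν) : ℝ):ℂ) * Complex.I)) • V p - cs i0 p • V p)‖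
          ≤ ∑ p ∈ Φs i0, ‖cs i0 p‖ * ((‖y‖/4) / ((∑ p ∈ Φs i0, ‖cs i0 p‖) + 1)) :=
            le_trans (norm_sum_le _ _) (Finset.sum_le_sum hterm)
        _ = (∑ p ∈ Φs i0, ‖cs i0 p‖) * ((‖y‖/4) / ((∑ p ∈ Φs i0, ‖cs i0 p‖) + 1)) := by
            rw [← Finset.sum_mul]
        _ ≤ ‖y‖/4 := by
            rw [mul_div_assoc']
            rw [div_le_iff₀ (by positivity)]
            nlinarith
    calc ‖w * y * star w - y‖
        ≤ ‖w * (y - b) * star w‖ + (‖w * b * star w - b‖ + ‖b - y‖) := by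
          rw [hdec]
          exact le_trans (norm_add_le _ _) (by gcongr; exact norm_add_le _ _)
      _ ≤ ‖y‖/8 + (‖y‖/4 + ‖y‖/8) := by gcongr
      _ = ‖y‖/2 := by ring
  -- positivity of the conjugates
  have hpos : ∀ w : B, 0 ≤ w * y * star w := by
    intro w
    have : w * y * star w = star (x * star w) * (x * star w) := by
      rw [star_mul, star_star, hy]
      simp only [mul_assoc]
    rw [this]
    exact star_mul_self_nonneg _
  have hy0 : 0 ≤ y := by rw [hy]; exact star_mul_self_nonneg x
  -- the norm lower bound along good times
  have hTlow : ∀ n : ℕ, max (2*K) 1 ≤ n → ‖y‖/(8*m) ≤ ‖T n y‖ := by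
    intro n hn
    have hn1' : 1 ≤ n := le_trans (le_max_right _ _) hn
    have h2K : 2*K ≤ n := le_trans (le_max_left _ _) hn
    have hKn : K ≤ n := by omega
    have hnR : (0:ℝ) < n := by exact_mod_cast hn1'
    obtain ⟨G, hGsub, hGcard, hGgood⟩ := hcount n
    -- Gcard * (‖y‖/2) ≤ ‖Σ_P‖
    have hsplit : ∑ q ∈ Finset.range n ×ˢ Finset.range n,
          (u ((q.1 : ℝ) * ν) * ι (e ((q.2 : ℝ) * μ))) * y
            * star (u ((q.1 : ℝ) * ν) * ι (e ((q.2 : ℝ) * μ)))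
        = ∑ q ∈ (Finset.range n ×ˢ Finset.range n) \ G,
          (u ((q.1 : ℝ) * ν) * ι (e ((q.2 : ℝ) * μ))) * y
            * star (u ((q.1 : ℝ) * ν) * ι (e ((q.2 : ℝ) * μ)))
          + ∑ q ∈ G,
          (u ((q.1 : ℝ) * ν) * ι (e ((q.2 : ℝ) * μ))) * y
            * star (u ((q.1 : ℝ) * ν) * ι (e ((q.2 : ℝ) * μ))) :=
      (Finset.sum_sdiff hGsub).symm
    have hrest : 0 ≤ ∑ q ∈ (Finset.range n ×ˢ Finset.range n) \ G,
          (u ((q.1 : ℝ) * ν) * ι (e ((q.2 : ℝ) * μ))) * y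
            * star (u ((q.1 : ℝ) * ν) * ι (e ((q.2 : ℝ) * μ))) :=
      Finset.sum_nonneg (fun q _ => hpos _)
    have hcy : (0:B) ≤ G.card • y := nsmul_nonneg hy0 _
    have h3 : ‖G.card • y‖ ≤ ‖G.card • y + ∑ q ∈ (Finset.range n ×ˢ Finset.range n) \ G,
          (u ((q.1 : ℝ) * ν) * ι (e ((q.2 : ℝ) * μ))) * y
            * star (u ((q.1 : ℝ) * ν) * ι (e ((q.2 : ℝ) * μ)))‖ :=
      CStarAlgebra.norm_le_norm_of_nonneg_of_le hcy (le_add_of_nonneg_right hrest)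
    have h4 : G.card • y + ∑ q ∈ (Finset.range n ×ˢ Finset.range n) \ G,
          (u ((q.1 : ℝ) * ν) * ι (e ((q.2 : ℝ) * μ))) * y
            * star (u ((q.1 : ℝ) * ν) * ι (e ((q.2 : ℝ) * μ)))
        = ∑ q ∈ Finset.range n ×ˢ Finset.range n,
          (u ((q.1 : ℝ) * ν) * ι (e ((q.2 : ℝ) * μ))) * y
            * star (u ((q.1 : ℝ) * ν) * ι (e ((q.2 : ℝ) * μ)))
          - ∑ q ∈ G, ((u ((q.1 : ℝ) * ν) * ι (e ((q.2 : ℝ) * μ))) * y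
            * star (u ((q.1 : ℝ) * ν) * ι (e ((q.2 : ℝ) * μ))) - y) := by
      rw [Finset.sum_sub_distrib, Finset.sum_const, hsplit]
      abel
    have h5 : ‖∑ q ∈ Finset.range n ×ˢ Finset.range n,
          (u ((q.1 : ℝ) * ν) * ι (e ((q.2 : ℝ) * μ))) * y
            * star (u ((q.1 : ℝ) * ν) * ι (e ((q.2 : ℝ) * μ)))
          - ∑ q ∈ G, ((u ((q.1 : ℝ) * ν) * ι (e ((q.2 : ℝ) * μ))) * y
            * star (u ((q.1 : ℝ) * ν) * ι (e ((q.2 : ℝ) * μ))) - y)‖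
        ≤ ‖∑ q ∈ Finset.range n ×ˢ Finset.range n,
          (u ((q.1 : ℝ) * ν) * ι (e ((q.2 : ℝ) * μ))) * y
            * star (u ((q.1 : ℝ) * ν) * ι (e ((q.2 : ℝ) * μ)))‖ + G.card * (‖y‖/2) := by
      refine le_trans (norm_sub_le _ _) ?_
      gcongr
      calc ‖∑ q ∈ G, ((u ((q.1 : ℝ) * ν) * ι (e ((q.2 : ℝ) * μ))) * y
            * star (u ((q.1 : ℝ) * ν) * ι (e ((q.2 : ℝ) * μ))) - y)‖
          ≤ ∑ q ∈ G, ‖(u ((q.1 : ℝ) * ν) * ι (e ((q.2 : ℝ) * μ))) * y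
            * star (u ((q.1 : ℝ) * ν) * ι (e ((q.2 : ℝ) * μ))) - y‖ := norm_sum_le _ _
        _ ≤ ∑ _q ∈ G, ‖y‖/2 := Finset.sum_le_sum (fun q hq => hgood q (hGgood q hq))
        _ = G.card * (‖y‖/2) := by rw [Finset.sum_const, nsmul_eq_mul]
    have h6 : ‖G.card • y‖ = (G.card : ℝ) * ‖y‖ := by
      rw [← Nat.cast_smul_eq_nsmul ℂ, norm_smul, Complex.norm_natCast]
    have hlowsum : (G.card : ℝ) * (‖y‖/2) ≤ ‖∑ q ∈ Finset.range n ×ˢ Finset.range n,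
          (u ((q.1 : ℝ) * ν) * ι (e ((q.2 : ℝ) * μ))) * y
            * star (u ((q.1 : ℝ) * ν) * ι (e ((q.2 : ℝ) * μ)))‖ := by
      rw [h4] at h3
      rw [h6] at h3
      linarith [le_trans h3 h5]
    -- count G
    have hGlow : ((n:ℝ)/2)^2 / m ≤ (G.card : ℝ) := by
      have hc : (((n - K)^2 : ℕ) : ℝ) ≤ (m : ℝ) * G.card := by exact_mod_cast hGcard
      have hsub : (((n - K) : ℕ) : ℝ) = (n : ℝ) - K := by
        rw [Nat.cast_sub hKn]
      have h2KR : 2*(K:ℝ) ≤ n := by exact_mod_cast h2K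
      have hhalf : (n:ℝ)/2 ≤ (n:ℝ) - K := by linarith
      have hp2 : ((n:ℝ)/2)^2 ≤ ((n:ℝ) - K)^2 := by
        apply pow_le_pow_left₀ (by positivity) hhalf
      rw [div_le_iff₀ (by exact_mod_cast hm)]
      push_cast at hc
      rw [hsub] at hc
      nlinarith
    -- assemble
    have hTval : ‖T n y‖ = (n:ℝ)⁻¹ * (n:ℝ)⁻¹ * ‖∑ q ∈ Finset.range n ×ˢ Finset.range n,
          (u ((q.1 : ℝ) * ν) * ι (e ((q.2 : ℝ) * μ))) * y
            * star (u ((q.1 : ℝ) * ν) * ι (e ((q.2 : ℝ) * μ)))‖ := by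
      rw [hT]
      simp only
      rw [norm_smul, norm_mul, norm_inv, Complex.norm_natCast]
    rw [hTval]
    calc ‖y‖/(8*m) = (n:ℝ)⁻¹ * (n:ℝ)⁻¹ * ((((n:ℝ)/2)^2/m) * (‖y‖/2)) := by
          field_simp
          ring
      _ ≤ (n:ℝ)⁻¹ * (n:ℝ)⁻¹ * ((G.card : ℝ) * (‖y‖/2)) := by gcongr
      _ ≤ (n:ℝ)⁻¹ * (n:ℝ)⁻¹ * ‖∑ q ∈ Finset.range n ×ˢ Finset.range n,
          (u ((q.1 : ℝ) * ν) * ι (e ((q.2 : ℝ) * μ))) * y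
            * star (u ((q.1 : ℝ) * ν) * ι (e ((q.2 : ℝ) * μ)))‖ := by gcongr
  -- conclude: the coefficient is nonzero
  have hφne : ε 0 (E 0 y) ≠ 0 := by
    have hnl : ‖y‖/(8*m) ≤ ‖(ε 0 (E 0 y)) • (1:B)‖ := by
      refine ge_of_tendsto hTy.norm ?_
      exact Filter.eventually_atTop.mpr ⟨max (2*K) 1, fun n hn => hTlow n hn⟩
    rw [norm_smul, hn1, mul_one] at hnl
    intro hcontra
    rw [hcontra, norm_zero] at hnl
    have hmR : (0:ℝ) < m := by exact_mod_cast hm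
    have : 0 < ‖y‖/(8*m) := by positivity
    linarith
  -- hence 1 ∈ S and S = univ
  have h1S : (1:B) ∈ S := by
    have h2 := (hSmul ((ε 0 (E 0 y)) • 1) ((ε 0 (E 0 y))⁻¹ • 1) hφy1).1
    rwa [smul_mul_assoc, one_mul, smul_smul, inv_mul_cancel₀ hφne, one_smul] at h2
  rw [Set.eq_univ_iff_forall]
  intro z
  have hz := (hSmul 1 z h1S).1
  rwa [mul_one] at hz
end
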